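/- If (x_i)_{i=1}^m is an ℓ₁⁺-K-sequence in a Banach space X and f ∈ S_{X*} satisfies f(xᵢ) ≥ 1/K for 1 ≤ i ≤ m, then the sequence (xᵢ/f(xᵢ))_{i=1}^m is a 2K-wide-(s) sequence. -/

import Mathlib

variable {X : Type*} [NormedAddCommGroup X] [NormedSpace ℝ X]

/-- Partial sum `∑_{i < p} aᵢ xᵢ` of a finite sequence. -/
def prefSum {m : ℕ} (x : Fin m → X) (a : Fin m → ℝ) (p : ℕ) : X :=
  ∑ i : Fin m, if (i : ℕ) < p then a i • x i else 0

/-- `(x_i)_{i=1}^m` is `K`-basic: the basis constant is at most `K`. -/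
def IsFinBasic {m : ℕ} (K : ℝ) (x : Fin m → X) : Prop :=
  ∀ (a : Fin m → ℝ) (p q : ℕ), p ≤ q → q ≤ m →
    ‖prefSum x a p‖ ≤ K * ‖prefSum x a q‖

/-- `(x_i)_{i=1}^m` is normalized: each vector has norm one. -/
def IsNormalizedFin {m : ℕ} (x : Fin m → X) : Prop := ∀ i, ‖x i‖ = 1

/-- An `ℓ₁⁺-K`-sequence: normalized, `K`-basic, and
`(1/K) ∑ aᵢ ≤ ‖∑ aᵢ xᵢ‖` for nonnegative scalars. -/
def IsL1Plus {m : ℕ} (K : ℝ) (x : Fin m → X) : Prop :=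
  IsNormalizedFin x ∧ IsFinBasic K x ∧
    ∀ a : Fin m → ℝ, (∀ i, 0 ≤ a i) → (1 / K) * ∑ i, a i ≤ ‖∑ i, a i • x i‖

/-- An `ℓ∞⁺-K`-sequence: normalized, `K`-basic, and there are coefficients
`aᵢ ∈ [1/K, 1]` with `‖∑ aᵢ xᵢ‖ ≤ K`. -/
def IsLInfPlus {m : ℕ} (K : ℝ) (x : Fin m → X) : Prop :=
  IsNormalizedFin x ∧ IsFinBasic K x ∧
    ∃ a : Fin m → ℝ, (∀ i, 1 / K ≤ a i ∧ a i ≤ 1) ∧ ‖∑ i, a i • x i‖ ≤ K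

/-- A `λ`-wide-(s) sequence: `2λ`-basic, `‖xᵢ‖ ≤ λ`, and
`sup_k |∑_{i≥k} aᵢ| ≤ λ ‖∑ aᵢ xᵢ‖` for all scalars. -/
def IsWideS {m : ℕ} (l : ℝ) (x : Fin m → X) : Prop :=
  IsFinBasic (2 * l) x ∧ (∀ i, ‖x i‖ ≤ l) ∧
    ∀ (a : Fin m → ℝ) (k : ℕ),
      |∑ i : Fin m, if k ≤ (i : ℕ) then a i else 0| ≤ l * ‖∑ i, a i • x i‖

/-- A `λ`-wide-(c) sequence: `λ`-basic, `1/λ ≤ ‖xᵢ‖ ≤ 1`, and `‖∑ xᵢ‖ ≤ λ`. -/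
def IsWideC {m : ℕ} (l : ℝ) (x : Fin m → X) : Prop :=
  IsFinBasic l x ∧ (∀ i, 1 / l ≤ ‖x i‖ ∧ ‖x i‖ ≤ 1) ∧ ‖∑ i, x i‖ ≤ l

/-- If `(x_i)` is an `ℓ₁⁺-K`-sequence and `f ∈ S_{X*}` with `f(xᵢ) ≥ 1/K`, then
`(xᵢ / f(xᵢ))` is a `2K`-wide-(s) sequence. -/
theorem wideS_of_l1Plus {m : ℕ} (K : ℝ) (hK : 1 ≤ K) (x : Fin m → X)
    (hx : IsL1Plus K x) (f : StrongDual ℝ X) (hf : ‖f‖ = 1)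
    (hfx : ∀ i, 1 / K ≤ f (x i)) :
    IsWideS (2 * K) (fun i => (f (x i))⁻¹ • x i) := by
  obtain ⟨hnorm, hbasic, _⟩ := hx
  have hKpos : (0:ℝ) < K := lt_of_lt_of_le one_pos hK
  have hpos : ∀ i, 0 < f (x i) := fun i =>
    lt_of_lt_of_le (one_div_pos.mpr hKpos) (hfx i)
  set y : Fin m → X := fun i => (f (x i))⁻¹ • x i with hy
  have hfy : ∀ i, f (y i) = 1 := by
    intro i
    simp only [hy, map_smul, smul_eq_mul]
    exact inv_mul_cancel₀ (ne_of_gt (hpos i))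
  -- prefSum of y in terms of prefSum of x
  have hpref : ∀ (a : Fin m → ℝ) (p : ℕ),
      prefSum y a p = prefSum x (fun i => a i * (f (x i))⁻¹) p := by
    intro a p
    unfold prefSum
    refine Finset.sum_congr rfl fun i _ => ?_
    by_cases h : (i : ℕ) < p <;> simp [h, hy, smul_smul]
  have hbasicY : IsFinBasic K y := by
    intro a p q hpq hqm
    rw [hpref, hpref]
    exact hbasic _ p q hpq hqm
  have hbasicY' : ∀ (a : Fin m → ℝ) (p : ℕ),
      ‖prefSum y a p‖ ≤ K * ‖prefSum y a m‖ := by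
    intro a p
    have heq : prefSum y a p = prefSum y a (min p m) := by
      unfold prefSum
      refine Finset.sum_congr rfl fun i _ => ?_
      have : ((i : ℕ) < p) ↔ ((i : ℕ) < min p m) := by
        constructor
        · intro h; exact lt_min h i.is_lt
        · intro h; exact lt_of_lt_of_le h (min_le_left _ _)
      by_cases h : (i : ℕ) < p
      · simp [h, this.mp h]
      · simp [h, fun hh => h (this.mpr hh)]
    rw [heq]
    exact hbasicY a (min p m) m (min_le_right _ _) le_rfl
  have hprefm : ∀ (a : Fin m → ℝ), prefSum y a m = ∑ i, a i • y i := by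
    intro a
    unfold prefSum
    exact Finset.sum_congr rfl fun i _ => by simp [i.is_lt]
  refine ⟨?_, ?_, ?_⟩
  · -- 2*(2K)-basic
    intro a p q hpq hqm
    refine (hbasicY a p q hpq hqm).trans ?_
    have : K ≤ 2 * (2 * K) := by nlinarith
    exact mul_le_mul_of_nonneg_right this (norm_nonneg _)
  · -- norms ≤ 2K
    intro i
    have h1 : f (x i) ≤ 1 := by
      have := f.le_opNorm (x i)
      rw [hf, hnorm i, one_mul] at this
      exact le_trans (le_abs_self _) this
    have hni : ‖y i‖ = (f (x i))⁻¹ := by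
      simp [hy, norm_smul, hnorm i, abs_of_pos (hpos i), abs_of_pos (inv_pos.mpr (hpos i))]
    rw [hni]
    have : (f (x i))⁻¹ ≤ K := by
      rw [inv_le_comm₀ (hpos i) hKpos]
      simpa [one_div] using hfx i
    nlinarith
  · -- tail estimate
    intro a k
    set S := ∑ i, a i • y i with hS
    have hfS : f S = ∑ i, a i := by
      simp [hS, map_sum, map_smul, smul_eq_mul, hfy]
    have hfP : f (prefSum y a k) = ∑ i : Fin m, if (i:ℕ) < k then a i else 0 := by
      unfold prefSum
      rw [map_sum]
      refine Finset.sum_congr rfl fun i _ => ?_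
      by_cases h : (i : ℕ) < k <;> simp [h, map_smul, smul_eq_mul, hfy]
    have htail : (∑ i : Fin m, if k ≤ (i:ℕ) then a i else 0)
        = f S - f (prefSum y a k) := by
      rw [hfS, hfP, ← Finset.sum_sub_distrib]
      refine Finset.sum_congr rfl fun i _ => ?_
      by_cases h : (i : ℕ) < k
      · simp [h, not_le.mpr h]
      · simp [h, not_lt.mp h]
    rw [htail]
    have h1 : |f S - f (prefSum y a k)| = |f (S - prefSum y a k)| := by
      rw [map_sub]
    rw [h1]
    have h2 : |f (S - prefSum y a k)| ≤ ‖S - prefSum y a k‖ := by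
      have := f.le_opNorm (S - prefSum y a k)
      rwa [hf, one_mul] at this
    refine h2.trans ?_
    have h3 : ‖S - prefSum y a k‖ ≤ ‖S‖ + ‖prefSum y a k‖ := norm_sub_le _ _
    have h4 : ‖prefSum y a k‖ ≤ K * ‖S‖ := by
      have := hbasicY' a k
      rwa [hprefm] at this
    nlinarith [norm_nonneg S]
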